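/- If 1/2 < H < 1, then the sequence ρ_k is strictly log-convex: ρ_{k-1} ρ_{k+1} > ρ_k^2 for all k ≥ 1. -/

import Mathlib

open Real MeasureTheory intervalIntegral Set

lemma key_k1 (a : ℝ) (h1 : 1 < a) (h2 : a < 2) : (4:ℝ)^a + 2 < 2 * 3^a := by
  set φ : ℝ → ℝ := fun x => 2 * (3:ℝ)^x - (4:ℝ)^x - 2 with hφ
  have hd1 : ∀ x : ℝ, HasDerivAt φ (2 * ((3:ℝ)^x * log 3) - (4:ℝ)^x * log 4) x := by
    intro x
    exact (((Real.hasStrictDerivAt_const_rpow (by norm_num : (0:ℝ) < 3) x).hasDerivAt.const_mul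
      2).sub (Real.hasStrictDerivAt_const_rpow (by norm_num : (0:ℝ) < 4) x).hasDerivAt).sub_const 2
  have hdφ : deriv φ = fun x => 2 * ((3:ℝ)^x * log 3) - (4:ℝ)^x * log 4 := by
    funext x; exact (hd1 x).deriv
  have hd2 : ∀ x : ℝ, HasDerivAt (deriv φ)
      (2 * ((3:ℝ)^x * log 3 * log 3) - (4:ℝ)^x * log 4 * log 4) x := by
    intro x
    rw [hdφ]
    exact ((((Real.hasStrictDerivAt_const_rpow (by norm_num : (0:ℝ) < 3) x).hasDerivAt.mul_const
      (log 3)).const_mul 2).sub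
      ((Real.hasStrictDerivAt_const_rpow (by norm_num : (0:ℝ) < 4) x).hasDerivAt.mul_const (log 4)))
  have hlog3 : 5 * log 3 < 8 * log 2 := by
    have : Real.log (3^(5:ℕ)) < Real.log (2^(8:ℕ)) :=
      Real.log_lt_log (by positivity) (by norm_num)
    rwa [Real.log_pow, Real.log_pow] at this
  have hlog3pos : 0 < log 3 := Real.log_pos (by norm_num)
  have hlog2pos : 0 < log 2 := Real.log_pos (by norm_num)
  have hlog4 : log 4 = 2 * log 2 := by
    rw [show (4:ℝ) = 2^(2:ℕ) by norm_num, Real.log_pow]; push_cast; ring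
  have hcc : StrictConcaveOn ℝ (Set.Icc (1:ℝ) 2) φ := by
    apply strictConcaveOn_of_deriv2_neg (convex_Icc 1 2)
    · exact fun x _ => (hd1 x).continuousAt.continuousWithinAt
    · intro x hx
      rw [interior_Icc] at hx
      have h2d : deriv^[2] φ x = 2 * ((3:ℝ)^x * log 3 * log 3) - (4:ℝ)^x * log 4 * log 4 := by
        simp only [Function.iterate_succ, Function.iterate_zero, Function.comp_apply, id]
        exact (hd2 x).deriv
      rw [h2d, hlog4]
      have h43 : (4:ℝ)^x = (3:ℝ)^x * ((4/3:ℝ))^x := by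
        rw [← Real.mul_rpow (by norm_num) (by norm_num)]; norm_num
      rw [h43]
      have hT : 0 < (3:ℝ)^x := by positivity
      have hcx : (4/3:ℝ) < ((4/3):ℝ)^x := by
        nth_rewrite 1 [show (4/3:ℝ) = (4/3:ℝ)^(1:ℝ) from (Real.rpow_one _).symm]
        exact Real.rpow_lt_rpow_of_exponent_lt (by norm_num) hx.1
      have h2 : 2*(log 3 * log 3) < 16/3 * (log 2 * log 2) := by
        nlinarith [mul_pos (show (0:ℝ) < 8*log 2 - 5*log 3 by linarith)
          (show (0:ℝ) < 8*log 2 + 5*log 3 by positivity)]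
      nlinarith [mul_lt_mul_of_pos_left h2 hT,
        mul_lt_mul_of_pos_left hcx (mul_pos hT (mul_pos hlog2pos hlog2pos))]
  have e1 : φ 1 = 0 := by rw [hφ]; norm_num
  have e2 : φ 2 = 0 := by
    show 2 * (3:ℝ)^(2:ℝ) - (4:ℝ)^(2:ℝ) - 2 = 0
    rw [Real.rpow_two, Real.rpow_two]; norm_num
  have h0 := hcc.2 (Set.mem_Icc.mpr ⟨le_refl (1:ℝ), by norm_num⟩)
    (Set.mem_Icc.mpr ⟨by norm_num, le_refl (2:ℝ)⟩) (by norm_num)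
    (show (0:ℝ) < 2 - a by linarith) (show (0:ℝ) < a - 1 by linarith) (by ring)
  rw [smul_eq_mul, smul_eq_mul, smul_eq_mul, smul_eq_mul, e1, e2,
    show (2-a)*(1:ℝ) + (a-1)*2 = a by ring] at h0
  have : (0:ℝ) < φ a := by linarith
  have h3 : (0:ℝ) < 2 * (3:ℝ)^a - (4:ℝ)^a - 2 := this
  linarith


-- derivative helper
lemma hasDerivAt_p1 (p x : ℝ) (hx : x ≠ 0) :
    HasDerivAt (fun y : ℝ => y ^ (p+1)) ((p+1) * x ^ p) x := by
  simpa [show p+1-1 = p by ring] using Real.hasDerivAt_rpow_const (x := x) (p := p+1) (Or.inl hx)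

-- continuity of the integrand on [0,1]
lemma contF (β c : ℝ) (hβ1 : -1 < β) (hβ0 : β < 0) (hc : 1 ≤ c) :
    ContinuousOn (fun u : ℝ => (1-u) * ((c+u)^β + (c-u)^β)) (Icc 0 1) := by
  have h1 : ContinuousOn (fun u : ℝ => (1-u) * (c+u)^β) (Icc 0 1) := by
    apply ContinuousOn.mul (by fun_prop)
    intro u hu
    exact ((Real.continuousAt_rpow_const (c+u) β
      (Or.inl (by simp only [mem_Icc] at hu; nlinarith))).comp
      (by fun_prop : Continuous (fun u : ℝ => c + u)).continuousAt).continuousWithinAt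
  have h2 : ContinuousOn (fun u : ℝ => (1-u) * (c-u)^β) (Icc 0 1) := by
    rcases eq_or_lt_of_le hc with rfl | hc1
    · -- c = 1 : the function equals (1-u)^(β+1) on [0,1]
      apply ContinuousOn.congr
        (f := fun u : ℝ => (1-u)^(β+1))
      · exact (Real.continuous_rpow_const (by linarith)).comp (by fun_prop) |>.continuousOn
      · intro u hu
        simp only [mem_Icc] at hu
        show (1-u) * (1-u)^β = (1-u)^(β+1)
        rw [Real.rpow_add_one' (by linarith) (by linarith), mul_comm]
    · apply ContinuousOn.mul (by fun_prop)
      intro u hu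
      exact ((Real.continuousAt_rpow_const (c-u) β
        (Or.inl (by simp only [mem_Icc] at hu; nlinarith))).comp
        (by fun_prop : Continuous (fun u : ℝ => c - u)).continuousAt).continuousWithinAt
  have := h1.add h2
  apply this.congr
  intro u _; simp only [Pi.add_apply]; ring

lemma integral_repr (β c : ℝ) (hβ1 : -1 < β) (hβ0 : β < 0) (hc : 1 ≤ c) :
    ∫ u in (0:ℝ)..1, (1-u) * ((c+u)^β + (c-u)^β)
      = ((c+1)^(β+2) - 2*c^(β+2) + (c-1)^(β+2)) / ((β+1)*(β+2)) := by
  have hb1 : (0:ℝ) < β + 1 := by linarith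
  have hb2 : (0:ℝ) < β + 2 := by linarith
  set Φ : ℝ → ℝ := fun u =>
    ((1-u) * (c+u)^(β+1) - (1-u) * (c-u)^(β+1)) / (β+1)
      + ((c+u)^(β+2) + (c-u)^(β+2)) / ((β+1)*(β+2)) with hΦ
  have hcont : ContinuousOn Φ (Icc 0 1) := by
    have hca : Continuous (fun u : ℝ => c + u) := by fun_prop
    have hcs : Continuous (fun u : ℝ => c - u) := by fun_prop
    have r1 := (Real.continuous_rpow_const hb1.le).comp hca
    have r2 := (Real.continuous_rpow_const hb1.le).comp hcs
    have r3 := (Real.continuous_rpow_const hb2.le).comp hca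
    have r4 := (Real.continuous_rpow_const hb2.le).comp hcs
    apply Continuous.continuousOn
    fun_prop
  have hderiv : ∀ u ∈ Ioo (0:ℝ) 1,
      HasDerivAt Φ ((1-u) * ((c+u)^β + (c-u)^β)) u := by
    intro u hu
    have hu0 : (0:ℝ) < u := hu.1
    have hu1 : u < 1 := hu.2
    have hcp : (0:ℝ) < c + u := by linarith
    have hcm : (0:ℝ) < c - u := by linarith
    have ha : HasDerivAt (fun y : ℝ => c + y) 1 u := (hasDerivAt_id u).const_add c
    have hs : HasDerivAt (fun y : ℝ => c - y) (-1) u := (hasDerivAt_id u).const_sub c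
    have hw : HasDerivAt (fun y : ℝ => 1 - y) (-1) u := (hasDerivAt_id u).const_sub 1
    have hp1 : HasDerivAt (fun y : ℝ => (c+y)^(β+1)) ((β+1) * (c+u)^β * 1) u :=
      (hasDerivAt_p1 β (c+u) hcp.ne').comp u ha
    have hp2 : HasDerivAt (fun y : ℝ => (c-y)^(β+1)) ((β+1) * (c-u)^β * (-1)) u :=
      (hasDerivAt_p1 β (c-u) hcm.ne').comp u hs
    have hq1 : HasDerivAt (fun y : ℝ => (c+y)^(β+2)) ((β+2) * (c+u)^(β+1) * 1) u := by
      have := (hasDerivAt_p1 (β+1) (c+u) hcp.ne').comp u ha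
      simpa [show β+1+1 = β+2 by ring, Function.comp_def] using this
    have hq2 : HasDerivAt (fun y : ℝ => (c-y)^(β+2)) ((β+2) * (c-u)^(β+1) * (-1)) u := by
      have := (hasDerivAt_p1 (β+1) (c-u) hcm.ne').comp u hs
      simpa [show β+1+1 = β+2 by ring, Function.comp_def] using this
    have hA : HasDerivAt (fun y : ℝ => (1-y) * (c+y)^(β+1))
        ((-1) * (c+u)^(β+1) + (1-u) * ((β+1) * (c+u)^β * 1)) u := hw.mul hp1
    have hB : HasDerivAt (fun y : ℝ => (1-y) * (c-y)^(β+1))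
        ((-1) * (c-u)^(β+1) + (1-u) * ((β+1) * (c-u)^β * (-1))) u := hw.mul hp2
    have hΦd := ((hA.sub hB).div_const (β+1)).add
      ((hq1.add hq2).div_const ((β+1)*(β+2)))
    refine hΦd.congr_deriv ?_
    field_simp
    ring
  have hint : IntervalIntegrable (fun u : ℝ => (1-u) * ((c+u)^β + (c-u)^β)) volume 0 1 := by
    have := (contF β c hβ1 hβ0 hc)
    rw [show Icc (0:ℝ) 1 = uIcc (0:ℝ) 1 by rw [uIcc_of_le]; norm_num] at this
    exact this.intervalIntegrable
  rw [intervalIntegral.integral_eq_sub_of_hasDerivAt_of_le (by norm_num) hcont hderiv hint]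
  rw [hΦ]
  simp only []
  have h0 : ((0:ℝ)) ^ (β+1) = 0 := Real.zero_rpow (by linarith)
  norm_num
  rw [show c + 1 = c+1 by ring]
  field_simp
  ring


lemma pointwise_lt (β c u : ℝ) (hβ0 : β < 0) (hc : 2 ≤ c) (hu0 : 0 < u) (hu1 : u < 1) :
    ((c+u)^β + (c-u)^β)^2
      < ((c-1+u)^β + (c-1-u)^β) * ((c+1+u)^β + (c+1-u)^β) := by
  have hx1 : (0:ℝ) < c-1+u := by linarith
  have hx2 : (0:ℝ) < c-1-u := by linarith
  have hy1 : (0:ℝ) < c+1+u := by linarith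
  have hy2 : (0:ℝ) < c+1-u := by linarith
  have hz1 : (0:ℝ) < c+u := by linarith
  have hz2 : (0:ℝ) < c-u := by linarith
  have t1 : (c+u)^β * (c+u)^β < (c-1+u)^β * (c+1+u)^β := by
    rw [← Real.mul_rpow hx1.le hy1.le, ← Real.mul_rpow hz1.le hz1.le]
    exact Real.rpow_lt_rpow_of_neg (by nlinarith) (by nlinarith) hβ0
  have t2 : (c-u)^β * (c-u)^β < (c-1-u)^β * (c+1-u)^β := by
    rw [← Real.mul_rpow hx2.le hy2.le, ← Real.mul_rpow hz2.le hz2.le]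
    exact Real.rpow_lt_rpow_of_neg (by nlinarith) (by nlinarith) hβ0
  have t3 : 2 * ((c+u)^β * (c-u)^β)
      ≤ (c-1+u)^β * (c+1-u)^β + (c-1-u)^β * (c+1+u)^β := by
    set a := (c-1+u)^β * (c+1-u)^β with ha
    set b := (c-1-u)^β * (c+1+u)^β with hb
    set m := (c+u)^β * (c-u)^β with hm
    have ham : 0 ≤ a := by positivity
    have hbm : 0 ≤ b := by positivity
    have hmpos : 0 < m := by positivity
    have hab : m^2 ≤ a * b := by
      have e1 : a * b = (((c-1+u)*(c+1-u)) * ((c-1-u)*(c+1+u)))^β := by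
        rw [Real.mul_rpow (by positivity) (by positivity),
          Real.mul_rpow hx1.le hy2.le, Real.mul_rpow hx2.le hy1.le]
      have e2 : m^2 = (((c+u)*(c-u)) * ((c+u)*(c-u)))^β := by
        rw [Real.mul_rpow (by positivity) (by positivity),
          Real.mul_rpow hz1.le hz2.le]
        ring
      rw [e1, e2]
      apply Real.rpow_le_rpow_of_nonpos
        (mul_pos (mul_pos hx1 hy2) (mul_pos hx2 hy1)) (by nlinarith) hβ0.le
    have h1 : m ≤ Real.sqrt (a*b) := by
      rw [show m = Real.sqrt (m^2) by rw [Real.sqrt_sq hmpos.le]]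
      exact Real.sqrt_le_sqrt hab
    have h2 : Real.sqrt (a*b) = Real.sqrt a * Real.sqrt b := Real.sqrt_mul ham b
    nlinarith [sq_nonneg (Real.sqrt a - Real.sqrt b), Real.sq_sqrt ham, Real.sq_sqrt hbm, h1, h2]
  nlinarith [t1, t2, t3]


lemma key_ge2 (β c : ℝ) (hβ1 : -1 < β) (hβ0 : β < 0) (hc : 2 ≤ c) :
    (∫ u in (0:ℝ)..1, (1-u) * (((c:ℝ)+u)^β + (c-u)^β))^2
      < (∫ u in (0:ℝ)..1, (1-u) * ((c-1+u)^β + (c-1-u)^β))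
        * (∫ u in (0:ℝ)..1, (1-u) * ((c+1+u)^β + (c+1-u)^β)) := by
  set Fm : ℝ → ℝ := fun u => (1-u) * ((c-1+u)^β + (c-1-u)^β) with hFm
  set Fc : ℝ → ℝ := fun u => (1-u) * ((c+u)^β + (c-u)^β) with hFc
  set Fp : ℝ → ℝ := fun u => (1-u) * ((c+1+u)^β + (c+1-u)^β) with hFp
  have contm : ContinuousOn Fm (Icc 0 1) := contF β (c-1) hβ1 hβ0 (by linarith)
  have contc : ContinuousOn Fc (Icc 0 1) := contF β c hβ1 hβ0 (by linarith)
  have contp : ContinuousOn Fp (Icc 0 1) := contF β (c+1) hβ1 hβ0 (by linarith)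
  have hmnn : ∀ u ∈ Icc (0:ℝ) 1, 0 ≤ Fm u := fun u hu => by
    simp only [mem_Icc] at hu
    show (0:ℝ) ≤ (1-u) * ((c-1+u)^β + (c-1-u)^β)
    exact mul_nonneg (by linarith) (add_nonneg (Real.rpow_nonneg (by linarith) _)
      (Real.rpow_nonneg (by linarith) _))
  have hcnn : ∀ u ∈ Icc (0:ℝ) 1, 0 ≤ Fc u := fun u hu => by
    simp only [mem_Icc] at hu
    show (0:ℝ) ≤ (1-u) * ((c+u)^β + (c-u)^β)
    exact mul_nonneg (by linarith) (add_nonneg (Real.rpow_nonneg (by linarith) _)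
      (Real.rpow_nonneg (by linarith) _))
  have hpnn : ∀ u ∈ Icc (0:ℝ) 1, 0 ≤ Fp u := fun u hu => by
    simp only [mem_Icc] at hu
    show (0:ℝ) ≤ (1-u) * ((c+1+u)^β + (c+1-u)^β)
    exact mul_nonneg (by linarith) (add_nonneg (Real.rpow_nonneg (by linarith) _)
      (Real.rpow_nonneg (by linarith) _))
  set S : ℝ → ℝ := fun u => Real.sqrt (Fm u * Fp u) with hS
  have contS : ContinuousOn S (Icc 0 1) :=
    Real.continuous_sqrt.comp_continuousOn (contm.mul contp)
  -- pointwise comparison Fc ≤ S on Ioc, strict inside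
  have hptws : ∀ u ∈ Ioo (0:ℝ) 1, Fc u < S u := by
    intro u hu
    have h1 : (0:ℝ) ≤ Fc u := hcnn u (Ioo_subset_Icc_self hu)
    rw [hS]
    simp only []
    rw [Real.lt_sqrt h1]
    have hp := pointwise_lt β c u hβ0 hc hu.1 hu.2
    have h1u : (0:ℝ) < 1 - u := by linarith [hu.2]
    calc Fc u ^ 2 = (1-u)^2 * ((c+u)^β + (c-u)^β)^2 := by rw [hFc]; ring
    _ < (1-u)^2 * (((c-1+u)^β + (c-1-u)^β) * ((c+1+u)^β + (c+1-u)^β)) := by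
        apply mul_lt_mul_of_pos_left hp (by positivity)
    _ = Fm u * Fp u := by rw [hFm, hFp]; ring
  have hle : ∀ u ∈ Ioc (0:ℝ) 1, Fc u ≤ S u := by
    intro u hu
    rcases lt_or_eq_of_le hu.2 with h | h
    · exact (hptws u ⟨hu.1, h⟩).le
    · have hc0 : Fc u = 0 := by rw [hFc, h]; ring
      rw [hc0]; exact Real.sqrt_nonneg _
  -- strict integral inequality
  have hstep1 : (∫ u in (0:ℝ)..1, Fc u) < ∫ u in (0:ℝ)..1, S u := by
    apply intervalIntegral.integral_lt_integral_of_continuousOn_of_le_of_exists_lt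
      one_pos contc contS hle
    exact ⟨1/2, by norm_num, hptws (1/2) (by norm_num)⟩
  -- Cauchy–Schwarz
  set μ : Measure ℝ := volume.restrict (Ioc 0 1) with hμ
  haveI : IsFiniteMeasure μ := by
    constructor
    rw [hμ, Measure.restrict_apply_univ, Real.volume_Ioc]
    exact ENNReal.ofReal_lt_top
  set f : ℝ → ℝ := fun u => Real.sqrt (Fm u) with hf
  set g : ℝ → ℝ := fun u => Real.sqrt (Fp u) with hg
  have contf : ContinuousOn f (Icc 0 1) := Real.continuous_sqrt.comp_continuousOn contm
  have contg : ContinuousOn g (Icc 0 1) := Real.continuous_sqrt.comp_continuousOn contp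
  have memf : MemLp f (ENNReal.ofReal 2) μ := by
    obtain ⟨C, hC⟩ := isCompact_Icc.exists_bound_of_continuousOn contf
    exact MemLp.of_bound
      ((contf.mono Ioc_subset_Icc_self).aestronglyMeasurable measurableSet_Ioc) C
      ((ae_restrict_iff' measurableSet_Ioc).2
        (Filter.Eventually.of_forall fun x hx => hC x (Ioc_subset_Icc_self hx)))
  have memg : MemLp g (ENNReal.ofReal 2) μ := by
    obtain ⟨C, hC⟩ := isCompact_Icc.exists_bound_of_continuousOn contg
    exact MemLp.of_bound
      ((contg.mono Ioc_subset_Icc_self).aestronglyMeasurable measurableSet_Ioc) C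
      ((ae_restrict_iff' measurableSet_Ioc).2
        (Filter.Eventually.of_forall fun x hx => hC x (Ioc_subset_Icc_self hx)))
  have hfnn : 0 ≤ᵐ[μ] f := Filter.Eventually.of_forall fun x => Real.sqrt_nonneg _
  have hgnn : 0 ≤ᵐ[μ] g := Filter.Eventually.of_forall fun x => Real.sqrt_nonneg _
  have hCS := MeasureTheory.integral_mul_le_Lp_mul_Lq_of_nonneg
    ((Real.holderConjugate_iff (p := 2) (q := 2)).mpr ⟨by norm_num, by norm_num⟩) hfnn hgnn memf memg
  -- rewrite the three integrals in hCS
  have e1 : ∫ a, f a * g a ∂μ = ∫ u in (0:ℝ)..1, S u := by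
    rw [intervalIntegral.integral_of_le zero_le_one, ← hμ]
    apply setIntegral_congr_fun measurableSet_Ioc
    intro u hu
    exact (Real.sqrt_mul (hmnn u (Ioc_subset_Icc_self hu)) _).symm
  have e2 : ∫ a, f a ^ (2:ℝ) ∂μ = ∫ u in (0:ℝ)..1, Fm u := by
    rw [intervalIntegral.integral_of_le zero_le_one, ← hμ]
    apply setIntegral_congr_fun measurableSet_Ioc
    intro u hu
    rw [hf]
    simp only []
    rw [Real.rpow_two, Real.sq_sqrt (hmnn u (Ioc_subset_Icc_self hu))]
  have e3 : ∫ a, g a ^ (2:ℝ) ∂μ = ∫ u in (0:ℝ)..1, Fp u := by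
    rw [intervalIntegral.integral_of_le zero_le_one, ← hμ]
    apply setIntegral_congr_fun measurableSet_Ioc
    intro u hu
    rw [hg]
    simp only []
    rw [Real.rpow_two, Real.sq_sqrt (hpnn u (Ioc_subset_Icc_self hu))]
  rw [e1, e2, e3] at hCS
  set A : ℝ := ∫ u in (0:ℝ)..1, Fm u with hA
  set B : ℝ := ∫ u in (0:ℝ)..1, Fp u with hB
  set M : ℝ := ∫ u in (0:ℝ)..1, Fc u with hM
  have hAnn : 0 ≤ A := intervalIntegral.integral_nonneg zero_le_one hmnn
  have hBnn : 0 ≤ B := intervalIntegral.integral_nonneg zero_le_one hpnn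
  have hMnn : 0 ≤ M := intervalIntegral.integral_nonneg zero_le_one hcnn
  have hfin : M < A^((1:ℝ)/2) * B^((1:ℝ)/2) := hstep1.trans_le hCS
  have hsq : (A^((1:ℝ)/2) * B^((1:ℝ)/2))^2 = A * B := by
    rw [mul_pow, ← Real.rpow_natCast (A ^ ((1:ℝ)/2)) 2, ← Real.rpow_natCast (B ^ ((1:ℝ)/2)) 2,
      ← Real.rpow_mul hAnn, ← Real.rpow_mul hBnn]
    norm_num
  calc M^2 < (A^((1:ℝ)/2) * B^((1:ℝ)/2))^2 := by
        apply pow_lt_pow_left₀ hfin hMnn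
        norm_num
  _ = A * B := hsq


theorem rho_log_convex_sequence (H : ℝ) (hH : H ∈ Set.Ioo (1/2 : ℝ) 1)
    (ρ : ℕ → ℝ) (hρ0 : ρ 0 = 1)
    (hρ : ∀ k : ℕ, 1 ≤ k →
      ρ k = (1/2) * (((k:ℝ)+1) ^ (2*H) - 2 * (k:ℝ) ^ (2*H) + ((k:ℝ)-1) ^ (2*H))) :
    ∀ k : ℕ, 1 ≤ k → ρ (k-1) * ρ (k+1) > (ρ k)^2 := by
  obtain ⟨hH1, hH2⟩ := hH
  intro k hk
  rcases eq_or_lt_of_le hk with h1 | h2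
  · -- k = 1
    subst h1
    have ha1 : 1 < 2*H := by linarith
    have ha2 : 2*H < 2 := by linarith
    have h2H0 : 2*H ≠ 0 := by positivity
    have e1 : ρ 1 = 1/2 * ((2:ℝ)^(2*H) - 2) := by
      rw [hρ 1 le_rfl]
      norm_num [Real.one_rpow, Real.zero_rpow h2H0]
    have e2 : ρ 2 = 1/2 * ((3:ℝ)^(2*H) - 2*2^(2*H) + 1) := by
      rw [hρ 2 (by norm_num)]
      norm_num [Real.one_rpow]
    have hkey := key_k1 (2*H) ha1 ha2
    have h4 : (2:ℝ)^(2*H) * 2^(2*H) = 4^(2*H) := by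
      rw [← Real.mul_rpow (by norm_num) (by norm_num)]; norm_num
    show ρ 0 * ρ 2 > ρ 1 ^ 2
    rw [hρ0, e1, e2]
    nlinarith [hkey, h4]
  · -- k ≥ 2
    have hk2 : 2 ≤ k := h2
    set β : ℝ := 2*H - 2 with hβdef
    have hβ1 : -1 < β := by rw [hβdef]; linarith
    have hβ0 : β < 0 := by rw [hβdef]; linarith
    set c : ℝ := (k:ℝ) with hcdef
    have hc2 : (2:ℝ) ≤ c := by rw [hcdef]; exact_mod_cast hk2
    have hb12 : β + 2 = 2*H := by rw [hβdef]; ring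
    set D : ℝ := (β+1)*(β+2)/2 with hDdef
    have hDpos : 0 < D := by
      rw [hDdef]; apply div_pos (mul_pos (by linarith) (by linarith)) (by norm_num)
    have hne1 : β + 1 ≠ 0 := ne_of_gt (by linarith)
    have hH0 : 2*H ≠ 0 := by positivity
    have hsimp : ∀ Y : ℝ, D * (Y / ((β+1)*(2*H))) = 1/2 * Y := by
      intro Y
      rw [hDdef, hb12]
      field_simp
    have ec : ρ k = D * (∫ u in (0:ℝ)..1, (1-u) * ((c+u)^β + (c-u)^β)) := by
      rw [hρ k hk, ← hcdef, integral_repr β c hβ1 hβ0 (by linarith), hb12, hsimp]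
    have em : ρ (k-1) = D * (∫ u in (0:ℝ)..1, (1-u) * ((c-1+u)^β + (c-1-u)^β)) := by
      rw [hρ (k-1) (by omega)]
      have hcast : ((k-1:ℕ):ℝ) = c - 1 := by
        rw [hcdef, Nat.cast_sub hk]; norm_num
      rw [hcast, integral_repr β (c-1) hβ1 hβ0 (by linarith), hb12, hsimp]
    have ep : ρ (k+1) = D * (∫ u in (0:ℝ)..1, (1-u) * ((c+1+u)^β + (c+1-u)^β)) := by
      rw [hρ (k+1) (by omega)]
      have hcast : ((k+1:ℕ):ℝ) = c + 1 := by rw [hcdef]; push_cast; ring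
      rw [hcast, integral_repr β (c+1) hβ1 hβ0 (by linarith), hb12, hsimp]
    have key := key_ge2 β c hβ1 hβ0 hc2
    rw [em, ep, ec]
    have hD2 : (0:ℝ) < D^2 := by positivity
    nlinarith [mul_lt_mul_of_pos_left key hD2]
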